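/- Suppose μ(Q), ν(Q) are differentiable real functions satisfying μ = fΔt + γΔt − γΔt e^{−μ}cos ν and ν = gΔt + γΔt e^{−μ}sin ν at each Q, where f, g are differentiable, Δt > 0, γ < 0. If at Q = Q₀ we have μ(Q₀) = 0, ν(Q₀) = 2πn (n ∈ ℤ), f(Q₀) = 0 and g(Q₀)Δt = 2πn, then dμ/dQ(Q₀) = (Δt/(1 − γΔt))·df/dQ(Q₀). In particular dμ/dQ(Q₀) has the same sign as df/dQ(Q₀). -/

import Mathlib

theorem stmt_17 (μ ν f g : ℝ → ℝ)
    (hμ : Differentiable ℝ μ) (hν : Differentiable ℝ ν)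
    (hf : Differentiable ℝ f) (hg : Differentiable ℝ g)
    (Δt γ : ℝ) (hΔt : 0 < Δt) (hγ : γ < 0)
    (hreal : ∀ Q, μ Q = f Q * Δt + γ * Δt - γ * Δt * Real.exp (-μ Q) * Real.cos (ν Q))
    (himag : ∀ Q, ν Q = g Q * Δt + γ * Δt * Real.exp (-μ Q) * Real.sin (ν Q))
    (Q₀ : ℝ) (n : ℤ)
    (hμ0 : μ Q₀ = 0) (hν0 : ν Q₀ = 2 * Real.pi * n)
    (hf0 : f Q₀ = 0) (hg0 : g Q₀ * Δt = 2 * Real.pi * n) :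
    deriv μ Q₀ = (Δt / (1 - γ * Δt)) * deriv f Q₀ ∧
    (0 < deriv f Q₀ → 0 < deriv μ Q₀) ∧
    (deriv f Q₀ < 0 → deriv μ Q₀ < 0) := by
  have hμd : HasDerivAt μ (deriv μ Q₀) Q₀ := (hμ Q₀).hasDerivAt
  have hνd : HasDerivAt ν (deriv ν Q₀) Q₀ := (hν Q₀).hasDerivAt
  have hfd : HasDerivAt f (deriv f Q₀) Q₀ := (hf Q₀).hasDerivAt
  have hexp : HasDerivAt (fun Q => Real.exp (-μ Q))
      (Real.exp (-μ Q₀) * -deriv μ Q₀) Q₀ := hμd.neg.exp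
  have hcos : HasDerivAt (fun Q => Real.cos (ν Q))
      (-Real.sin (ν Q₀) * deriv ν Q₀) Q₀ := hνd.cos
  have hR : HasDerivAt (fun Q => f Q * Δt + γ * Δt - γ * Δt * Real.exp (-μ Q) * Real.cos (ν Q))
      ((deriv f Q₀ * Δt)
        - ((γ * Δt * (Real.exp (-μ Q₀) * -deriv μ Q₀)) * Real.cos (ν Q₀)
            + (γ * Δt * Real.exp (-μ Q₀)) * (-Real.sin (ν Q₀) * deriv ν Q₀))) Q₀ := by
    exact ((hfd.mul_const Δt).add_const (γ * Δt)).sub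
      ((hexp.const_mul (γ * Δt)).mul hcos)
  have hμeq : μ = fun Q => f Q * Δt + γ * Δt - γ * Δt * Real.exp (-μ Q) * Real.cos (ν Q) :=
    funext hreal
  have hkey : deriv μ Q₀ = (deriv f Q₀ * Δt)
        - ((γ * Δt * (Real.exp (-μ Q₀) * -deriv μ Q₀)) * Real.cos (ν Q₀)
            + (γ * Δt * Real.exp (-μ Q₀)) * (-Real.sin (ν Q₀) * deriv ν Q₀)) := by
    conv_lhs => rw [hμeq]
    exact hR.deriv
  rw [hμ0, hν0] at hkey
  have hc : Real.cos (2 * Real.pi * n) = 1 := by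
    have := Real.cos_int_mul_two_pi n
    rw [show (n : ℝ) * (2 * Real.pi) = 2 * Real.pi * n by ring] at this
    exact this
  have hs : Real.sin (2 * Real.pi * n) = 0 := by
    rw [show (2 : ℝ) * Real.pi * n = (2 * n : ℤ) * Real.pi by push_cast; ring]
    exact Real.sin_int_mul_pi _
  rw [hc, hs] at hkey
  simp only [neg_zero, Real.exp_zero, mul_one, one_mul, zero_mul, neg_mul, mul_neg] at hkey
  have hpos : 0 < 1 - γ * Δt := by nlinarith
  have heq : deriv μ Q₀ = (Δt / (1 - γ * Δt)) * deriv f Q₀ := by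
    field_simp
    rw [eq_div_iff (by nlinarith)]
    nlinarith [hkey]
  refine ⟨heq, ?_, ?_⟩
  · intro h; rw [heq]; positivity
  · intro h; rw [heq]
    have : 0 < Δt / (1 - γ * Δt) := by positivity
    nlinarith
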